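/- Let B be a unital algebra over ℂ and X algebraically free from B. The free difference quotient ∂_{X:B} : B⟨X⟩ → B⟨X⟩ ⊗ B⟨X⟩, the unique derivation sending B to 0 and X to 1⊗1, is coassociative: (∂_{X:B} ⊗ id) ∘ ∂_{X:B} = (id ⊗ ∂_{X:B}) ∘ ∂_{X:B}. -/
import Mathlib

open TensorProduct

set_option synthInstance.maxHeartbeats 400000
set_option maxHeartbeats 1000000

variable {P : Type*} [Ring P] [Algebra ℂ P]

/-- `d : P → P ⊗ P` is a derivation for the natural `P`-bimodule structure on `P ⊗ P`. -/
def IsTensorDerivation (d : P →ₗ[ℂ] P ⊗[ℂ] P) : Prop :=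
  ∀ a b : P, d (a * b) =
    LinearMap.rTensor P (LinearMap.mulLeft ℂ a) (d b) +
    LinearMap.lTensor P (LinearMap.mulRight ℂ b) (d a)

/-- left multiplication on the first tensor factor, as a bilinear map. -/
noncomputable def Bfl (v : P ⊗[ℂ] P) : P →ₗ[ℂ] P ⊗[ℂ] P :=
  ((LinearMap.rTensorHom P).comp (LinearMap.mul ℂ P)).flip v

@[simp] lemma Bfl_apply (v : P ⊗[ℂ] P) (x : P) :
    Bfl v x = LinearMap.rTensor P (LinearMap.mulLeft ℂ x) v := rfl

lemma Bfl_add (v w : P ⊗[ℂ] P) : Bfl (v + w) = Bfl v + Bfl w := by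
  simp [Bfl]

@[simp] lemma Bfl_zero : Bfl (0 : P ⊗[ℂ] P) = 0 := by simp [Bfl]

lemma Bfl_smul (c : ℂ) (v : P ⊗[ℂ] P) : Bfl (c • v) = c • Bfl v := by
  simp [Bfl]

-- naturality: assoc ∘ (rTensor d) ∘ (lTensor f) = lTensor (lTensor f) ∘ assoc ∘ rTensor d
lemma natH2 (d : P →ₗ[ℂ] P ⊗[ℂ] P) (f : P →ₗ[ℂ] P) (u : P ⊗[ℂ] P) :
    TensorProduct.assoc ℂ P P P (LinearMap.rTensor P d (LinearMap.lTensor P f u)) =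
    LinearMap.lTensor P (LinearMap.lTensor P f)
      (TensorProduct.assoc ℂ P P P (LinearMap.rTensor P d u)) := by
  induction u using TensorProduct.induction_on with
  | zero => simp
  | tmul x y =>
    simp only [LinearMap.lTensor_tmul, LinearMap.rTensor_tmul]
    induction (d x) using TensorProduct.induction_on with
    | zero => simp
    | tmul p q => simp
    | add s t hs ht => simp [add_tmul, hs, ht]
  | add u v hu hv => simp [hu, hv]

lemma natC (d : P →ₗ[ℂ] P ⊗[ℂ] P) (f : P →ₗ[ℂ] P) (v : P ⊗[ℂ] P) :
    LinearMap.lTensor P d (LinearMap.rTensor P f v) =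
    LinearMap.rTensor (P ⊗[ℂ] P) f (LinearMap.lTensor P d v) := by
  induction v using TensorProduct.induction_on with
  | zero => simp
  | tmul x y => simp
  | add u v hu hv => simp [hu, hv]

lemma H1 (d : P →ₗ[ℂ] P ⊗[ℂ] P) (hder : IsTensorDerivation d) (a : P) (v : P ⊗[ℂ] P) :
    TensorProduct.assoc ℂ P P P
        (LinearMap.rTensor P d (LinearMap.rTensor P (LinearMap.mulLeft ℂ a) v)) =
    LinearMap.rTensor (P ⊗[ℂ] P) (LinearMap.mulLeft ℂ a)
        (TensorProduct.assoc ℂ P P P (LinearMap.rTensor P d v)) +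
    LinearMap.lTensor P (Bfl v) (d a) := by
  induction v using TensorProduct.induction_on with
  | zero => simp [Bfl_zero]
  | tmul b₁ b₂ =>
    simp only [LinearMap.rTensor_tmul, LinearMap.mulLeft_apply]
    rw [hder a b₁]
    rw [add_tmul, map_add]
    congr 1
    · -- assoc ((rTensor (mulLeft a) (d b₁)) ⊗ b₂) = rTensor (mulLeft a) (assoc (d b₁ ⊗ b₂))
      induction (d b₁) using TensorProduct.induction_on with
      | zero => simp
      | tmul p q => simp
      | add s t hs ht => simp [add_tmul, hs, ht]
    · -- assoc ((lTensor (mulRight b₁) (d a)) ⊗ b₂) = lTensor (Bfl (b₁ ⊗ b₂)) (d a)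
      induction (d a) using TensorProduct.induction_on with
      | zero => simp
      | tmul p q => simp
      | add s t hs ht => simp [add_tmul, hs, ht]
  | add u v hu hv =>
    simp only [map_add, hu, hv, Bfl_add, LinearMap.lTensor_add, LinearMap.add_apply]
    abel

/-- Coassociativity of the free difference quotient: let `B⟨X⟩` be the algebra of
noncommutative polynomials in `X` with coefficients in a unital `ℂ`-algebra `B`
(modelled as a `ℂ`-algebra `P` generated by a unital subalgebra `B` together with an
element `X` algebraically free from `B`), and let `∂_{X:B} : B⟨X⟩ → B⟨X⟩ ⊗ B⟨X⟩` be the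
(unique) derivation sending `B` to `0` and `X` to `1 ⊗ 1`.  Then `∂_{X:B}` is
coassociative: `(∂_{X:B} ⊗ id) ∘ ∂_{X:B} = (id ⊗ ∂_{X:B}) ∘ ∂_{X:B}`. -/
theorem freeDifferenceQuotient_coassociative
    (B : Subalgebra ℂ P) (X : P)
    (hgen : Algebra.adjoin ℂ ((B : Set P) ∪ {X}) = ⊤)
    (d : P →ₗ[ℂ] P ⊗[ℂ] P)
    (hder : IsTensorDerivation d)
    (hB : ∀ b ∈ B, d b = 0)
    (hX : d X = (1 : P) ⊗ₜ[ℂ] (1 : P)) :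
    ∀ a : P, TensorProduct.assoc ℂ P P P (LinearMap.rTensor P d (d a)) =
      LinearMap.lTensor P d (d a) := by
  intro a
  have ha : a ∈ Algebra.adjoin ℂ ((B : Set P) ∪ {X}) := hgen ▸ Algebra.mem_top
  have d1 : d 1 = 0 := hB 1 B.one_mem
  induction ha using Algebra.adjoin_induction with
  | mem x hx =>
    rcases hx with hx | hx
    · rw [hB x hx]; simp
    · rw [Set.mem_singleton_iff] at hx
      subst hx
      rw [hX]
      simp [d1]
  | algebraMap r =>
    rw [hB _ (B.algebraMap_mem r)]; simp
  | add x y hx hy ihx ihy =>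
    simp [map_add, ihx, ihy]
  | mul a b ha hb iha ihb =>
    rw [hder a b]
    simp only [map_add]
    rw [H1 d hder a (d b), natH2 d (LinearMap.mulRight ℂ b) (d a), iha, ihb]
    rw [natC d (LinearMap.mulLeft ℂ a) (d b)]
    have hdm : d ∘ₗ LinearMap.mulRight ℂ b =
        Bfl (d b) + (LinearMap.lTensor P (LinearMap.mulRight ℂ b)) ∘ₗ d := by
      ext x
      simp only [LinearMap.coe_comp, Function.comp_apply, LinearMap.mulRight_apply,
        LinearMap.add_apply, Bfl_apply]
      rw [hder x b]
    calc LinearMap.rTensor (P ⊗[ℂ] P) (LinearMap.mulLeft ℂ a) (LinearMap.lTensor P d (d b)) +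
          LinearMap.lTensor P (Bfl (d b)) (d a) +
          LinearMap.lTensor P (LinearMap.lTensor P (LinearMap.mulRight ℂ b))
            (LinearMap.lTensor P d (d a))
        = LinearMap.rTensor (P ⊗[ℂ] P) (LinearMap.mulLeft ℂ a) (LinearMap.lTensor P d (d b)) +
          LinearMap.lTensor P (d ∘ₗ LinearMap.mulRight ℂ b) (d a) := by
          rw [hdm, LinearMap.lTensor_add, LinearMap.add_apply, LinearMap.lTensor_comp,
            LinearMap.comp_apply]
          abel
      _ = _ := by
          rw [LinearMap.lTensor_comp, LinearMap.comp_apply]
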